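/- Let G=(V,E) be a finite graph without loops, q ∈ {2,3,…}, β > 0, J=(J_e : e∈E) non-negative reals, and set λ_e = βJ_e for each e ∈ E. Then for all distinct vertices x,y ∈ V, the Potts two-point function satisfies σ(x,y) = E_λ(C(G_P^{x,y};q)) / E_λ(C(G_P;q)), i.e. the ratio of the mean number of non-zero mod-q flows on the Poisson graph with the extra edge xy added, to the mean number of non-zero mod-q flows on the Poisson graph itself. -/

import Mathlib

open scoped BigOperators symmDiff Classical

noncomputable section FlowsAndFerromagnets

/-- The number of non-zero mod-`q` flows on the (multi)graph with vertex type `V`,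
edge-index type `ι`, and a fixed orientation in which edge `i` leaves `s i` and
arrives at `t i`.  A mod-`q` flow assigns a value of `ZMod q` to every oriented edge
so that, at every vertex, the total flow leaving equals the total flow arriving
(mod `q`); it is non-zero if no edge carries the value `0`. -/
def flowCount (V : Type) [Fintype V] [DecidableEq V] {ι : Type} [Fintype ι]
    (s t : ι → V) (q : ℕ) : ℕ :=
  Nat.card {f : ι → ZMod q //
    (∀ i, f i ≠ 0) ∧
    ∀ v : V, (∑ i, if s i = v then f i else 0) = (∑ i, if t i = v then f i else 0)}

/-- `C(G_m; q)`: the number of non-zero mod-`q` flows on the multigraph `G_m`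
obtained from `G` (edges indexed by `E`, with endpoints `s e`, `t e`) by replacing
each edge `e` by `m e` parallel copies. -/
def flowCountM {V E : Type} [Fintype V] [DecidableEq V] [Fintype E]
    (s t : E → V) (m : E → ℕ) (q : ℕ) : ℕ :=
  flowCount V (fun x : Σ e : E, Fin (m e) => s x.1) (fun x : Σ e : E, Fin (m e) => t x.1) q

/-- `C(G_m^{x,y}; q)`: the number of non-zero mod-`q` flows on the multigraph `G_m`
augmented by one extra edge joining `x` and `y`. -/
def flowCountMxy {V E : Type} [Fintype V] [DecidableEq V] [Fintype E]
    (s t : E → V) (m : E → ℕ) (x y : V) (q : ℕ) : ℕ :=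
  flowCount V
    (fun o : Option (Σ e : E, Fin (m e)) => o.elim x (fun z => s z.1))
    (fun o : Option (Σ e : E, Fin (m e)) => o.elim y (fun z => t z.1)) q

/-- The Poisson weight `∏_e e^{-λ_e} λ_e^{m_e} / m_e!` of a vector of edge multiplicities. -/
def poissonWt {E : Type} [Fintype E] (lam : E → ℝ) (m : E → ℕ) : ℝ :=
  ∏ e, Real.exp (-lam e) * lam e ^ (m e) / (Nat.factorial (m e))

/-- Expectation `E_λ(f(P))` with respect to independent Poisson multiplicities `P e`
of mean `lam e`. -/
def poissonExp {E : Type} [Fintype E] (lam : E → ℝ) (f : (E → ℕ) → ℝ) : ℝ :=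
  ∑' m : E → ℕ, poissonWt lam m * f m

/-- Probability `P_λ(P ∈ A)` with respect to independent Poisson multiplicities. -/
def poissonProb {E : Type} [Fintype E] (lam : E → ℝ) (A : (E → ℕ) → Prop) : ℝ :=
  ∑' m : E → ℕ, poissonWt lam m * (if A m then 1 else 0)

/-- Probability of an event for two independent families of independent Poisson
multiplicities. -/
def poissonProb2 {E : Type} [Fintype E] (lam : E → ℝ)
    (A : (E → ℕ) → (E → ℕ) → Prop) : ℝ :=
  ∑' m : E → ℕ, ∑' m' : E → ℕ,
    poissonWt lam m * poissonWt lam m' * (if A m m' then 1 else 0)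

/-- The (unnormalised) Potts weight `exp(∑_e β J_e (q δ_e(σ) - 1))` of a spin
configuration `σ`. -/
def pottsWt {V E : Type} [Fintype E] (s t : E → V) (q : ℕ) (β : ℝ) (J : E → ℝ)
    (σ : V → Fin q) : ℝ :=
  Real.exp (∑ e, β * J e * ((q : ℝ) * (if σ (s e) = σ (t e) then 1 else 0) - 1))

/-- The Potts partition function `Z_P`. -/
def pottsZ (V : Type) {E : Type} [Fintype V] [DecidableEq V] [Fintype E]
    (s t : E → V) (q : ℕ) (β : ℝ) (J : E → ℝ) : ℝ :=
  ∑ σ : V → Fin q, pottsWt s t q β J σ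

/-- The Potts two-point function `σ(x,y) = ∑_σ (q δ_{σ_x,σ_y} - 1) π(σ)`. -/
def pottsTwoPoint {V E : Type} [Fintype V] [DecidableEq V] [Fintype E]
    (s t : E → V) (q : ℕ) (β : ℝ) (J : E → ℝ) (x y : V) : ℝ :=
  (∑ σ : V → Fin q, ((q : ℝ) * (if σ x = σ y then 1 else 0) - 1) * pottsWt s t q β J σ)
    / pottsZ V s t q β J

/-- The degree of the vertex `v` in the multigraph `G_m`. -/
def mDeg {V E : Type} [Fintype E] [DecidableEq V] (s t : E → V) (m : E → ℕ) (v : V) : ℕ :=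
  ∑ e, m e * ((if s e = v then 1 else 0) + (if t e = v then 1 else 0))

/-- The multigraph `G_m` is even: every vertex has even degree. -/
def IsEvenM {V E : Type} [Fintype E] [DecidableEq V] (s t : E → V) (m : E → ℕ) : Prop :=
  ∀ v : V, Even (mDeg s t m v)

/-- The multigraph `G_m^{x,y}` (with one extra edge joining `x` and `y`) is even. -/
def IsEvenMxy {V E : Type} [Fintype E] [DecidableEq V] (s t : E → V) (m : E → ℕ)
    (x y : V) : Prop :=
  ∀ v : V, Even (mDeg s t m v + (if v = x then 1 else 0) + (if v = y then 1 else 0))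

/-- The source set `∂m` of a vector of multiplicities: the set of vertices of odd
degree in `G_m`. -/
def sources {V E : Type} [Fintype E] [DecidableEq V] (s t : E → V) (m : E → ℕ) : Set V :=
  {v : V | Odd (mDeg s t m v)}

/-- The simple graph on `V` induced by the edges `e` satisfying `pred e`. -/
def openGraph {V E : Type} (s t : E → V) (pred : E → Prop) : SimpleGraph V :=
  SimpleGraph.fromRel (fun a b => ∃ e, pred e ∧ s e = a ∧ t e = b)

/-- `x ↔ y in m`: `x` and `y` lie in the same component of `(V, {e : m e ≥ 1})`. -/
def ConnectedIn {V E : Type} (s t : E → V) (m : E → ℕ) (x y : V) : Prop :=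
  (openGraph s t fun e => m e ≠ 0).Reachable x y

/-- `x ↔ y` in the percolation configuration `ω`. -/
def ConnectedInB {V E : Type} (s t : E → V) (ω : E → Bool) (x y : V) : Prop :=
  (openGraph s t fun e => ω e = true).Reachable x y

/-- The number of connected components of the graph `(V, {e : pred e})`
(isolated vertices count). -/
def numComp {V E : Type} [Fintype V] (s t : E → V) (pred : E → Prop) : ℕ :=
  Nat.card (openGraph s t pred).ConnectedComponent

/-- Product (percolation) weight of a configuration, with edge densities `p`. -/
def percWt {E : Type} [Fintype E] (p : E → ℝ) (ω : E → Bool) : ℝ :=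
  ∏ e, if ω e then p e else 1 - p e

/-- Random-cluster weight of the configuration `ω`. -/
def rcWt {V E : Type} [Fintype V] [Fintype E] (s t : E → V) (p : E → ℝ) (q : ℝ)
    (ω : E → Bool) : ℝ :=
  percWt p ω * q ^ numComp s t (fun e => ω e = true)

/-- Random-cluster probability `φ_{p,q}(A)` of an event `A`. -/
def rcProb {V E : Type} [Fintype V] [Fintype E] (s t : E → V) (p : E → ℝ) (q : ℝ)
    (A : (E → Bool) → Prop) : ℝ :=
  (∑ ω : E → Bool, if A ω then rcWt s t p q ω else 0) / (∑ ω : E → Bool, rcWt s t p q ω)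

/-- The Whitney rank-generating function `W(u,v) = ∑_{F' ⊆ F} u^{r(F')} v^{c(F')}`
of the multigraph with vertex type `V` and edge-index type `ι`, where
`r(F') = |V| - k(F')` and `c(F') = |F'| - |V| + k(F')`. -/
def whitney (V : Type) [Fintype V] {ι : Type} [Fintype ι] (s t : ι → V) (u v : ℝ) : ℝ :=
  ∑ F : Finset ι,
    u ^ (Fintype.card V - numComp s t (· ∈ F)) *
      v ^ (F.card - (Fintype.card V - numComp s t (· ∈ F)))

/-- `F_q(G_m) = (-1)^{|edges| + |V| - 1} W_{G_m}(-1, -q)`, a real-`q` version of the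
flow polynomial of the multigraph `G_m`. -/
def flowPolyW {V E : Type} [Fintype V] [Fintype E] (s t : E → V) (q : ℝ) (m : E → ℕ) : ℝ :=
  (-1 : ℝ) ^ ((∑ e, m e) + Fintype.card V - 1) *
    whitney V (fun x : Σ e : E, Fin (m e) => s x.1) (fun x : Σ e : E, Fin (m e) => t x.1)
      (-1) (-q)

/-- `F_q(G_m^{x,y})`: as `flowPolyW`, for the multigraph `G_m` with one extra edge
joining `x` and `y`. -/
def flowPolyWxy {V E : Type} [Fintype V] [Fintype E] (s t : E → V) (q : ℝ) (m : E → ℕ)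
    (x y : V) : ℝ :=
  (-1 : ℝ) ^ (((∑ e, m e) + 1) + Fintype.card V - 1) *
    whitney V (fun o : Option (Σ e : E, Fin (m e)) => o.elim x (fun z => s z.1))
      (fun o : Option (Σ e : E, Fin (m e)) => o.elim y (fun z => t z.1)) (-1) (-q)

end FlowsAndFerromagnets

lemma addChar_map_sum {A M : Type*} [AddCommMonoid A] [CommMonoid M] (ψ : AddChar A M)
    {ι : Type*} (s : Finset ι) (g : ι → A) :
    ψ (∑ i ∈ s, g i) = ∏ i ∈ s, ψ (g i) := by
  classical
  induction s using Finset.induction_on with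
  | empty => simp
  | @insert a s h ih => rw [Finset.sum_insert h, Finset.prod_insert h, AddChar.map_add_eq_mul, ih]

lemma keyA {V : Type} [Fintype V] [DecidableEq V] {ι : Type} [Fintype ι]
    (s t : ι → V) (q : ℕ) [NeZero q] :
    ∑ σ : V → ZMod q, ∏ i, ((q : ℂ) * (if σ (s i) = σ (t i) then 1 else 0) - 1)
      = (q : ℂ) ^ Fintype.card V * (flowCount V s t q : ℂ) := by
  classical
  have hq0 : q ≠ 0 := NeZero.ne q
  have hroot : IsPrimitiveRoot (Complex.exp (2 * Real.pi * Complex.I / q)) q :=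
    Complex.isPrimitiveRoot_exp q hq0
  set ψ : AddChar (ZMod q) ℂ := AddChar.zmodChar q hroot.pow_eq_one with hψdef
  have hψ : ψ.IsPrimitive := AddChar.zmodChar_primitive_of_primitive_root q hroot
  have hsum : ∀ d : ZMod q, ∑ c : ZMod q, ψ (c * d) = if d = 0 then (q : ℂ) else 0 := by
    intro d
    have h := AddChar.sum_mulShift d hψ
    rw [ZMod.card] at h
    rw [h]
    split_ifs <;> simp
  have hfac : ∀ a b : ZMod q, (q : ℂ) * (if a = b then 1 else 0) - 1
      = ∑ k : ZMod q, (if k = 0 then 0 else ψ (k * (a - b))) := by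
    intro a b
    have h1 : ∀ k : ZMod q, (if k = 0 then 0 else ψ (k * (a - b)))
        = ψ (k * (a - b)) - (if k = 0 then 1 else 0) := by
      intro k
      split_ifs with h
      · simp [h]
      · simp
    rw [Finset.sum_congr rfl fun k _ => h1 k, Finset.sum_sub_distrib, hsum (a - b),
      Finset.sum_ite_eq' Finset.univ (0 : ZMod q) (fun _ => (1 : ℂ))]
    by_cases hab : a = b <;> simp [hab, sub_eq_zero]
  set D : (ι → ZMod q) → V → ZMod q := fun f v =>
    (∑ i, if s i = v then f i else 0) - (∑ i, if t i = v then f i else 0) with hD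
  have hswap : ∀ (f : ι → ZMod q) (σ : V → ZMod q),
      ∑ i, f i * (σ (s i) - σ (t i)) = ∑ v, σ v * D f v := by
    intro f σ
    have h1 : ∀ r : ι → V, ∑ i, f i * σ (r i)
        = ∑ v, σ v * ∑ i, (if r i = v then f i else 0) := by
      intro r
      calc ∑ i, f i * σ (r i)
          = ∑ i, ∑ v, (if r i = v then f i * σ v else 0) := by
            refine Finset.sum_congr rfl fun i _ => ?_
            rw [Finset.sum_ite_eq]
            simp
        _ = ∑ v, ∑ i, (if r i = v then f i * σ v else 0) := Finset.sum_comm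
        _ = ∑ v, σ v * ∑ i, (if r i = v then f i else 0) := by
            refine Finset.sum_congr rfl fun v _ => ?_
            rw [Finset.mul_sum]
            refine Finset.sum_congr rfl fun i _ => ?_
            split_ifs <;> ring
    simp only [mul_sub, Finset.sum_sub_distrib, h1, hD]
  have hinner : ∀ f : ι → ZMod q,
      (∑ σ : V → ZMod q, ∏ i, (if f i = 0 then 0 else ψ (f i * (σ (s i) - σ (t i)))))
        = if (∀ i, f i ≠ 0) ∧ (∀ v, D f v = 0) then (q : ℂ) ^ Fintype.card V else 0 := by
    intro f
    by_cases hf : ∀ i, f i ≠ 0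
    · have hstep : ∀ σ : V → ZMod q,
          (∏ i, (if f i = 0 then 0 else ψ (f i * (σ (s i) - σ (t i)))))
            = ∏ v, ψ (σ v * D f v) := by
        intro σ
        rw [Finset.prod_congr rfl fun i _ => if_neg (hf i), ← addChar_map_sum,
          hswap f σ, addChar_map_sum]
      rw [Finset.sum_congr rfl fun σ _ => hstep σ]
      have hfub : (∑ σ : V → ZMod q, ∏ v, ψ (σ v * D f v))
          = ∏ v, ∑ c : ZMod q, ψ (c * D f v) := by
        rw [Finset.prod_univ_sum, Fintype.piFinset_univ]
      rw [hfub, Finset.prod_congr rfl fun v _ => hsum (D f v)]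
      by_cases hDf : ∀ v, D f v = 0
      · rw [if_pos ⟨hf, hDf⟩, Finset.prod_congr rfl fun v _ => if_pos (hDf v)]
        simp [Finset.card_univ]
      · obtain ⟨v0, hv0⟩ := not_forall.mp hDf
        rw [if_neg (by tauto),
          Finset.prod_eq_zero (Finset.mem_univ v0) (by rw [if_neg hv0])]
    · obtain ⟨i0, hi0⟩ := not_forall.mp hf
      rw [not_not] at hi0
      rw [if_neg (by tauto)]
      refine Finset.sum_eq_zero fun σ _ => ?_
      exact Finset.prod_eq_zero (Finset.mem_univ i0) (if_pos hi0)
  calc ∑ σ : V → ZMod q, ∏ i, ((q : ℂ) * (if σ (s i) = σ (t i) then 1 else 0) - 1)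
      = ∑ σ : V → ZMod q, ∑ f ∈ Fintype.piFinset (fun _ : ι => (Finset.univ : Finset (ZMod q))),
          ∏ i, (if f i = 0 then 0 else ψ (f i * (σ (s i) - σ (t i)))) := by
        refine Finset.sum_congr rfl fun σ _ => ?_
        rw [Finset.prod_congr rfl fun i _ => hfac (σ (s i)) (σ (t i)), Finset.prod_univ_sum]
    _ = ∑ f : ι → ZMod q, ∑ σ : V → ZMod q,
          ∏ i, (if f i = 0 then 0 else ψ (f i * (σ (s i) - σ (t i)))) := by
        rw [Fintype.piFinset_univ]
        exact Finset.sum_comm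
    _ = ∑ f : ι → ZMod q,
          if (∀ i, f i ≠ 0) ∧ (∀ v, D f v = 0) then (q : ℂ) ^ Fintype.card V else 0 :=
        Finset.sum_congr rfl fun f _ => hinner f
    _ = (q : ℂ) ^ Fintype.card V * (flowCount V s t q : ℂ) := by
        rw [← Finset.sum_filter, Finset.sum_const, nsmul_eq_mul, mul_comm]
        congr 1
        have hcard : (Finset.univ.filter fun f : ι → ZMod q =>
            (∀ i, f i ≠ 0) ∧ ∀ v, D f v = 0).card = flowCount V s t q := by
          rw [flowCount, Nat.card_eq_fintype_card, Fintype.card_subtype]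
          congr 1
          apply Finset.filter_congr
          intro f _
          simp only [hD, sub_eq_zero]
        rw [hcard]

lemma keyA_real {V : Type} [Fintype V] [DecidableEq V] {ι : Type} [Fintype ι]
    (s t : ι → V) (q : ℕ) [NeZero q] :
    ∑ σ : V → ZMod q, ∏ i, ((q : ℝ) * (if σ (s i) = σ (t i) then 1 else 0) - 1)
      = (q : ℝ) ^ Fintype.card V * (flowCount V s t q : ℝ) := by
  have h := keyA s t q
  have hcast : ((∑ σ : V → ZMod q, ∏ i,
      ((q : ℝ) * (if σ (s i) = σ (t i) then 1 else 0) - 1) : ℝ) : ℂ)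
      = ∑ σ : V → ZMod q, ∏ i, ((q : ℂ) * (if σ (s i) = σ (t i) then 1 else 0) - 1) := by
    push_cast
    refine Finset.sum_congr rfl fun σ _ => Finset.prod_congr rfl fun i _ => ?_
    split_ifs <;> simp
  have h2 : ((∑ σ : V → ZMod q, ∏ i,
      ((q : ℝ) * (if σ (s i) = σ (t i) then 1 else 0) - 1) : ℝ) : ℂ)
      = (((q : ℝ) ^ Fintype.card V * (flowCount V s t q : ℝ) : ℝ) : ℂ) := by
    rw [hcast, h]; push_cast; ring
  exact_mod_cast h2

lemma flowM_id {V E : Type} [Fintype V] [DecidableEq V] [Fintype E]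
    (s t : E → V) (q : ℕ) [NeZero q] (m : E → ℕ) :
    (q : ℝ) ^ Fintype.card V * (flowCountM s t m q : ℝ)
      = ∑ σ : V → ZMod q, ∏ e, ((q : ℝ) * (if σ (s e) = σ (t e) then 1 else 0) - 1) ^ m e := by
  have h := keyA_real (fun x : Σ e : E, Fin (m e) => s x.1)
    (fun x : Σ e : E, Fin (m e) => t x.1) q
  rw [flowCountM, ← h]
  refine Finset.sum_congr rfl fun σ _ => ?_
  rw [← Finset.univ_sigma_univ, Finset.prod_sigma]
  exact Finset.prod_congr rfl fun e _ => by
    simp [Finset.prod_const]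

lemma flowMxy_id {V E : Type} [Fintype V] [DecidableEq V] [Fintype E]
    (s t : E → V) (q : ℕ) [NeZero q] (x y : V) (m : E → ℕ) :
    (q : ℝ) ^ Fintype.card V * (flowCountMxy s t m x y q : ℝ)
      = ∑ σ : V → ZMod q, ((q : ℝ) * (if σ x = σ y then 1 else 0) - 1) *
          ∏ e, ((q : ℝ) * (if σ (s e) = σ (t e) then 1 else 0) - 1) ^ m e := by
  have h := keyA_real (fun o : Option (Σ e : E, Fin (m e)) => o.elim x (fun z => s z.1))
    (fun o : Option (Σ e : E, Fin (m e)) => o.elim y (fun z => t z.1)) q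
  rw [flowCountMxy, ← h]
  refine Finset.sum_congr rfl fun σ _ => ?_
  rw [Fintype.prod_option]
  simp only [Option.elim]
  congr 1
  rw [← Finset.univ_sigma_univ, Finset.prod_sigma]
  exact Finset.prod_congr rfl fun e _ => by
    show ∏ _i : Fin (m e), ((q : ℝ) * (if σ (s e) = σ (t e) then 1 else 0) - 1) = _
    rw [Fin.prod_const]

def PiProdGood (α : Type) [Fintype α] : Prop :=
  ∀ g : α → ℕ → ℝ, (∀ a, Summable fun n => |g a n|) →
    Summable (fun m : α → ℕ => |∏ a, g a (m a)|) ∧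
      (∑' m : α → ℕ, ∏ a, g a (m a)) = ∏ a, ∑' n, g a n

lemma piProdGood_of_equiv {α β : Type} [Fintype α] [Fintype β] (e : α ≃ β)
    (h : PiProdGood α) : PiProdGood β := by
  intro g hg
  obtain ⟨h1, h2⟩ := h (fun a => g (e a)) (fun a => hg (e a))
  let E2 : (α → ℕ) ≃ (β → ℕ) := e.arrowCongr (Equiv.refl ℕ)
  have key : ∀ m : α → ℕ, (∏ b, g b (E2 m b)) = ∏ a, g (e a) (m a) := by
    intro m
    rw [← e.prod_comp (fun b => g b (E2 m b))]
    refine Finset.prod_congr rfl fun a _ => ?_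
    simp [E2, Equiv.arrowCongr]
  constructor
  · refine (E2.summable_iff (f := fun m : β → ℕ => |∏ b, g b (m b)|)).mp ?_
    exact h1.congr fun m => by simp only [Function.comp]; rw [key m]
  · have ht := E2.tsum_eq (f := fun m : β → ℕ => ∏ b, g b (m b))
    rw [← ht, tsum_congr key, h2, ← e.prod_comp (fun b => ∑' n, g b n)]

set_option maxHeartbeats 1000000 in
lemma piProdGood_option {γ : Type} [Fintype γ] (h : PiProdGood γ) : PiProdGood (Option γ) := by
  intro g hg
  obtain ⟨h1, h2⟩ := h (fun a => g (some a)) (fun a => hg (some a))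
  let E3 : (Option γ → ℕ) ≃ ℕ × (γ → ℕ) := Equiv.piOptionEquivProd
  have key : ∀ p : ℕ × (γ → ℕ), (∏ o : Option γ, g o (E3.symm p o))
      = g none p.1 * ∏ a : γ, g (some a) (p.2 a) := by
    intro p
    rw [Fintype.prod_option]
    rfl
  have hsumm2 : Summable (fun p : ℕ × (γ → ℕ) => |g none p.1| * |∏ a, g (some a) (p.2 a)|) :=
    (hg none).mul_of_nonneg h1 (fun n => abs_nonneg _) (fun m => abs_nonneg _)
  constructor
  · refine (E3.symm.summable_iff
      (f := fun m : Option γ → ℕ => |∏ o, g o (m o)|)).mp ?_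
    refine hsumm2.congr fun p => ?_
    simp only [Function.comp]
    rw [key p, abs_mul]
  · have ht := E3.symm.tsum_eq (f := fun m : Option γ → ℕ => ∏ o, g o (m o))
    rw [← ht, tsum_congr key]
    have habs1 : Summable fun n => ‖g none n‖ := by
      simpa only [Real.norm_eq_abs] using hg none
    have habs2 : Summable fun m : γ → ℕ => ‖∏ a, g (some a) (m a)‖ := by
      simpa only [Real.norm_eq_abs] using h1
    rw [← tsum_mul_tsum_of_summable_norm habs1 habs2, h2, Fintype.prod_option]

lemma piProdGood_fin : ∀ n : ℕ, PiProdGood (Fin n) := by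
  intro n
  induction n with
  | zero =>
    intro g hg
    haveI : IsEmpty (Fin 0) := by infer_instance
    haveI : Unique (Fin 0 → ℕ) :=
      ⟨⟨fun a => a.elim0⟩, fun m => funext fun a => a.elim0⟩
    constructor
    · exact (hasSum_single (f := fun m : Fin 0 → ℕ => |∏ a, g a (m a)|) default
        fun b hb => absurd (Subsingleton.elim b default) hb).summable
    · rw [tsum_eq_single default fun b hb => absurd (Subsingleton.elim b default) hb]
      simp
  | succ k ih =>
    exact piProdGood_of_equiv (finSuccEquiv k).symm (piProdGood_option ih)

lemma piProdGood_all (α : Type) [Fintype α] : PiProdGood α :=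
  piProdGood_of_equiv (Fintype.equivFin α).symm (piProdGood_fin _)

lemma exp_term {lam r : ℝ} :
    (Summable fun n : ℕ => |Real.exp (-lam) * lam ^ n / n.factorial * r ^ n|) ∧
      (∑' n : ℕ, Real.exp (-lam) * lam ^ n / n.factorial * r ^ n)
        = Real.exp (-lam) * Real.exp (lam * r) := by
  have h1 : ∀ n : ℕ, Real.exp (-lam) * lam ^ n / n.factorial * r ^ n
      = Real.exp (-lam) * ((lam * r) ^ n / n.factorial) := by
    intro n; rw [mul_pow]; ring
  constructor
  · have h2 : Summable (fun n : ℕ => Real.exp (-lam) * ((|lam| * |r|) ^ n / n.factorial)) :=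
      (Real.summable_pow_div_factorial _).mul_left _
    refine h2.congr fun n => ?_
    rw [h1, abs_mul, abs_of_pos (Real.exp_pos _), abs_div, abs_pow, abs_mul, Nat.abs_cast]
  · rw [tsum_congr h1, tsum_mul_left]
    congr 1
    rw [Real.exp_eq_exp_ℝ]
    simp [NormedSpace.exp_eq_tsum_div]

lemma poisson_flow_eval {V E : Type} [Fintype V] [DecidableEq V] [Fintype E]
    (s t : E → V) (q : ℕ) [NeZero q] (lam : E → ℝ) (hlam : ∀ e, 0 ≤ lam e)
    (c : (V → ZMod q) → ℝ) (F : (E → ℕ) → ℝ)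
    (hF : ∀ m : E → ℕ, (q : ℝ) ^ Fintype.card V * F m
      = ∑ σ : V → ZMod q, c σ *
          ∏ e, ((q : ℝ) * (if σ (s e) = σ (t e) then 1 else 0) - 1) ^ m e) :
    poissonExp lam F = ((q : ℝ) ^ Fintype.card V)⁻¹ * Real.exp (-(∑ e, lam e)) *
      ∑ σ : V → ZMod q, c σ *
        ∏ e, Real.exp (lam e * ((q : ℝ) * (if σ (s e) = σ (t e) then 1 else 0) - 1)) := by
  have hq0 : ((q : ℝ) ^ Fintype.card V) ≠ 0 := by
    have : (0 : ℝ) < (q : ℝ) := by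
      exact_mod_cast Nat.pos_of_ne_zero (NeZero.ne q)
    positivity
  set A : (V → ZMod q) → E → ℝ :=
    fun σ e => (q : ℝ) * (if σ (s e) = σ (t e) then 1 else 0) - 1 with hA
  -- per σ, per e facts
  have hge : ∀ (σ : V → ZMod q) (e : E),
      (Summable fun n : ℕ => |Real.exp (-lam e) * lam e ^ n / (n.factorial : ℝ) * A σ e ^ n|) :=
    fun σ e => (exp_term (lam := lam e) (r := A σ e)).1
  have hpi : ∀ σ : V → ZMod q,
      Summable (fun m : E → ℕ =>
        |∏ e, Real.exp (-lam e) * lam e ^ (m e) / ((m e).factorial : ℝ) * A σ e ^ (m e)|) ∧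
      (∑' m : E → ℕ, ∏ e, Real.exp (-lam e) * lam e ^ (m e) / ((m e).factorial : ℝ) * A σ e ^ (m e))
        = ∏ e, ∑' n : ℕ, Real.exp (-lam e) * lam e ^ n / (n.factorial : ℝ) * A σ e ^ n :=
    fun σ => piProdGood_all E
      (fun e n => Real.exp (-lam e) * lam e ^ n / (n.factorial : ℝ) * A σ e ^ n) (hge σ)
  have hrw : ∀ (σ : V → ZMod q) (m : E → ℕ),
      poissonWt lam m * ∏ e, A σ e ^ (m e)
        = ∏ e, Real.exp (-lam e) * lam e ^ (m e) / ((m e).factorial : ℝ) * A σ e ^ (m e) := by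
    intro σ m
    rw [poissonWt, ← Finset.prod_mul_distrib]
  have htσ : ∀ σ : V → ZMod q,
      (∑' m : E → ℕ, poissonWt lam m * ∏ e, A σ e ^ (m e))
        = Real.exp (-(∑ e, lam e)) * ∏ e, Real.exp (lam e * A σ e) := by
    intro σ
    rw [tsum_congr (hrw σ), (hpi σ).2,
      Finset.prod_congr rfl fun e _ => (exp_term (lam := lam e) (r := A σ e)).2,
      Finset.prod_mul_distrib, ← Real.exp_sum]
    congr 2
    rw [← Finset.sum_neg_distrib]
  have hsσ : ∀ σ : V → ZMod q,
      Summable (fun m : E → ℕ => c σ * (poissonWt lam m * ∏ e, A σ e ^ (m e))) := by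
    intro σ
    refine Summable.mul_left _ ?_
    refine ((hpi σ).1.of_abs).congr fun m => ?_
    rw [hrw σ m]
  calc poissonExp lam F
      = ∑' m : E → ℕ, ((q : ℝ) ^ Fintype.card V)⁻¹ *
          ∑ σ : V → ZMod q, c σ * (poissonWt lam m * ∏ e, A σ e ^ (m e)) := by
        rw [poissonExp]
        refine tsum_congr fun m => ?_
        have hFm : F m = ((q : ℝ) ^ Fintype.card V)⁻¹ *
            ∑ σ : V → ZMod q, c σ * ∏ e, A σ e ^ (m e) := by
          rw [← hF m, inv_mul_cancel_left₀ hq0]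
        rw [hFm, mul_left_comm]
        congr 1
        rw [Finset.mul_sum]
        exact Finset.sum_congr rfl fun σ _ => by ring
    _ = ((q : ℝ) ^ Fintype.card V)⁻¹ *
          ∑ σ : V → ZMod q, c σ * (Real.exp (-(∑ e, lam e)) * ∏ e, Real.exp (lam e * A σ e)) := by
        rw [tsum_mul_left]
        congr 1
        rw [Summable.tsum_finsetSum fun σ _ => hsσ σ]
        refine Finset.sum_congr rfl fun σ _ => ?_
        rw [tsum_mul_left, htσ σ]
    _ = ((q : ℝ) ^ Fintype.card V)⁻¹ * Real.exp (-(∑ e, lam e)) *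
          ∑ σ : V → ZMod q, c σ * ∏ e, Real.exp (lam e * A σ e) := by
        rw [mul_assoc]
        congr 1
        rw [Finset.mul_sum]
        exact Finset.sum_congr rfl fun σ _ => by ring

/-- Theorem 1 (flows and Potts correlations): for a finite loopless graph `G`,
`q ∈ {2,3,…}`, `β > 0`, non-negative couplings `J`, and `λ_e = β J_e`, the Potts
two-point function `σ(x,y)` equals the ratio of the mean number of non-zero mod-`q`
flows on the Poisson graph `G_P^{x,y}` to that on `G_P`. -/
theorem potts_correlation_eq_flow_ratio
    (V E : Type) [Fintype V] [DecidableEq V] [Fintype E]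
    (s t : E → V) (hloop : ∀ e, s e ≠ t e)
    (q : ℕ) (hq : 2 ≤ q) (β : ℝ) (hβ : 0 < β)
    (J : E → ℝ) (hJ : ∀ e, 0 ≤ J e)
    (lam : E → ℝ) (hlam : ∀ e, lam e = β * J e)
    (x y : V) (hxy : x ≠ y) :
    pottsTwoPoint s t q β J x y =
      poissonExp lam (fun m => (flowCountMxy s t m x y q : ℝ)) /
        poissonExp lam (fun m => (flowCountM s t m q : ℝ)) := by
  haveI : NeZero q := ⟨by omega⟩
  have hqpos : (0 : ℝ) < (q : ℝ) := by exact_mod_cast (by omega : 0 < q)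
  have hlam0 : ∀ e, 0 ≤ lam e := fun e => by rw [hlam e]; exact mul_nonneg hβ.le (hJ e)
  set A : (V → ZMod q) → E → ℝ :=
    fun σ e => (q : ℝ) * (if σ (s e) = σ (t e) then 1 else 0) - 1 with hA
  set Zb := ∑ σ : V → ZMod q, ∏ e, Real.exp (lam e * A σ e) with hZb
  set Nb := ∑ σ : V → ZMod q, ((q : ℝ) * (if σ x = σ y then 1 else 0) - 1) *
    ∏ e, Real.exp (lam e * A σ e) with hNb
  set K : ℝ := ((q : ℝ) ^ Fintype.card V)⁻¹ * Real.exp (-(∑ e, lam e)) with hK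
  have h1 : poissonExp lam (fun m => (flowCountM s t m q : ℝ)) = K * Zb := by
    have h := poisson_flow_eval s t q lam hlam0 (fun _ => 1)
      (fun m => (flowCountM s t m q : ℝ))
      (fun m => by
        rw [flowM_id s t q m]
        exact Finset.sum_congr rfl fun σ _ => (one_mul _).symm)
    rw [h, hZb, hK]
    congr 1
    exact Finset.sum_congr rfl fun σ _ => one_mul _
  have h2 : poissonExp lam (fun m => (flowCountMxy s t m x y q : ℝ)) = K * Nb := by
    have h := poisson_flow_eval s t q lam hlam0
      (fun σ => (q : ℝ) * (if σ x = σ y then 1 else 0) - 1)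
      (fun m => (flowCountMxy s t m x y q : ℝ))
      (fun m => flowMxy_id s t q x y m)
    rw [h, hNb, hK]
  let ε : Fin q ≃ ZMod q := Fintype.equivOfCardEq (by simp [ZMod.card])
  let Φ : (V → Fin q) ≃ (V → ZMod q) := Equiv.arrowCongr (Equiv.refl V) ε
  have hΦ : ∀ (σ : V → Fin q) (v : V), Φ σ v = ε (σ v) := fun σ v => rfl
  have hwt : ∀ σ : V → Fin q, pottsWt s t q β J σ = ∏ e, Real.exp (lam e * A (Φ σ) e) := by
    intro σ
    rw [pottsWt, Real.exp_sum]
    refine Finset.prod_congr rfl fun e _ => ?_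
    congr 1
    rw [hlam e, hA]
    simp only [hΦ]
    simp only [Equiv.apply_eq_iff_eq]
  have hZ : pottsZ V s t q β J = Zb := by
    rw [pottsZ, hZb]
    exact Fintype.sum_equiv Φ _ _ fun σ => hwt σ
  have hN : (∑ σ : V → Fin q, ((q : ℝ) * (if σ x = σ y then 1 else 0) - 1) *
      pottsWt s t q β J σ) = Nb := by
    rw [hNb]
    refine Fintype.sum_equiv Φ _ _ fun σ => ?_
    rw [hwt σ]
    congr 2
    simp only [hΦ]
    simp only [Equiv.apply_eq_iff_eq]
  have hKne : K ≠ 0 := by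
    rw [hK]
    exact ne_of_gt (mul_pos (inv_pos.mpr (pow_pos hqpos _)) (Real.exp_pos _))
  rw [pottsTwoPoint, hZ, hN, h1, h2, mul_div_mul_left _ _ hKne]
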